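/- Let n > 0, C ≥ 1 be real numbers and f : (0, ∞) → ℝ a differentiable function satisfying t²·f'(t) + 2t·f(t) + n/2 ≥ 0 for all t > 0. Suppose t₁ > 0, f(t₁) ≥ n·C/t₁, and t₂ ∈ [t₁, C·t₁]. Then f(t₂) ≥ f(t₁)/(2C²). -/

import Mathlib

/-- Quantitative curvature lower bound from the traced LYH inequality:
if `t² f' + 2t f + n/2 ≥ 0`, `f(t₁) ≥ nC/t₁` and `t₂ ∈ [t₁, Ct₁]`,
then `f(t₂) ≥ f(t₁)/(2C²)`. -/
theorem lyh_trace_quantitative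
    (n C : ℝ) (hn : 0 < n) (hC : 1 ≤ C) (f : ℝ → ℝ)
    (hdiff : ∀ t : ℝ, 0 < t → DifferentiableAt ℝ f t)
    (hineq : ∀ t : ℝ, 0 < t → 0 ≤ t ^ 2 * deriv f t + 2 * t * f t + n / 2)
    (t₁ t₂ : ℝ) (ht₁ : 0 < t₁) (hf₁ : f t₁ ≥ n * C / t₁)
    (ht₂ : t₂ ∈ Set.Icc t₁ (C * t₁)) :
    f t₂ ≥ f t₁ / (2 * C ^ 2) := by
  obtain ⟨h12, h2C⟩ := ht₂
  have ht₂pos : 0 < t₂ := lt_of_lt_of_le ht₁ h12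
  set g : ℝ → ℝ := fun t => t ^ 2 * f t + n / 2 * t with hg
  have hderiv : ∀ t : ℝ, 0 < t →
      HasDerivAt g (t ^ 2 * deriv f t + 2 * t * f t + n / 2) t := by
    intro t ht
    have h1 : HasDerivAt (fun t : ℝ => t ^ 2) (2 * t) t := by
      simpa using (hasDerivAt_pow 2 t)
    have h2 := (hdiff t ht).hasDerivAt
    have h3 := h1.mul h2
    have h4 : HasDerivAt (fun t : ℝ => n / 2 * t) (n / 2) t := by
      simpa using (hasDerivAt_id t).const_mul (n / 2)
    have := h3.add h4
    exact this.congr_deriv (by ring)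
  have hmono : MonotoneOn g (Set.Icc t₁ t₂) := by
    apply monotoneOn_of_deriv_nonneg (convex_Icc t₁ t₂)
    · apply ContinuousOn.add
      · exact (continuousOn_pow 2).mul (fun t ht => ((hdiff t
          (lt_of_lt_of_le ht₁ ht.1)).continuousAt.continuousWithinAt))
      · exact (continuous_const.mul continuous_id).continuousOn
    · intro t ht
      rw [interior_Icc] at ht
      exact ((hderiv t (lt_trans ht₁ ht.1)).differentiableAt).differentiableWithinAt
    · intro t ht
      rw [interior_Icc] at ht
      have htpos : 0 < t := lt_trans ht₁ ht.1
      rw [(hderiv t htpos).deriv]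
      exact hineq t htpos
  have hgle : g t₁ ≤ g t₂ :=
    hmono (Set.left_mem_Icc.mpr h12) (Set.right_mem_Icc.mpr h12) h12
  simp only [hg] at hgle
  have hCpos : (0 : ℝ) < C := lt_of_lt_of_le one_pos hC
  have hf₁' : t₁ * f t₁ ≥ n * C := by
    calc t₁ * f t₁ ≥ t₁ * (n * C / t₁) := by
          exact mul_le_mul_of_nonneg_left hf₁ (le_of_lt ht₁)
      _ = n * C := by field_simp
  rw [ge_iff_le, div_le_iff₀ (by positivity)]
  have hfpos : 0 < f t₁ := lt_of_lt_of_le (by positivity) hf₁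
  have h1 : t₂ ^ 2 ≤ C ^ 2 * t₁ ^ 2 := by nlinarith
  have h3 : (2 * C ^ 2 * t₁ ^ 2 - t₂ ^ 2) * f t₁ ≥ C ^ 2 * t₁ ^ 2 * f t₁ := by nlinarith
  have h4 : C ^ 2 * t₁ ^ 2 * f t₁ ≥ C ^ 2 * t₁ * (n * C) := by nlinarith [sq_nonneg C, mul_pos hCpos hCpos]
  have h5 : n * C ^ 3 * t₁ ≥ n * C ^ 2 * (t₂ - t₁) := by nlinarith [mul_pos (mul_pos hn hCpos) hCpos]
  have hkey : (2 * C ^ 2 * t₁ ^ 2 - t₂ ^ 2) * f t₁ ≥ C ^ 2 * n * (t₂ - t₁) := by nlinarith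
  nlinarith [mul_pos ht₂pos ht₂pos, sq_nonneg t₂, mul_pos (mul_pos ht₂pos ht₂pos) (mul_pos hCpos hCpos)]
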